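/- For any representation V of a quiver Q, a weight σ, the minimal witness W of (V,σ), and any morphism φ : W → V/W, the kernel of φ is a witness of (V,σ); consequently ker φ = W and φ has image of dimension vector i with σ(i) ≤ 0 implying σ(i) = 0. -/

import Mathlib

open Module

/-- A family of subspaces `W x ⊆ ℂ^{α x}` is a subrepresentation of the
representation `M` of the quiver with vertices `Vt`, arrows `At`,
head map `hd`, tail map `tl`, if it is stable under all arrow maps. -/
def IsSubrep {Vt At : Type} (hd tl : At → Vt) (α : Vt → ℕ)
    (M : ∀ a : At, Matrix (Fin (α (hd a))) (Fin (α (tl a))) ℂ)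
    (W : ∀ x : Vt, Submodule ℂ (Fin (α x) → ℂ)) : Prop :=
  ∀ a : At, ∀ v ∈ W (tl a), (M a).mulVec v ∈ W (hd a)

/-- `σ(dim W) = ∑ x σ(x) dim W(x)`. -/
noncomputable def sval {Vt : Type} [Fintype Vt] (α : Vt → ℕ) (σ : Vt → ℤ)
    (W : ∀ x : Vt, Submodule ℂ (Fin (α x) → ℂ)) : ℤ :=
  ∑ x, σ x * (Module.finrank ℂ (W x) : ℤ)

/-- A witness of `(V,σ)` : a subrepresentation maximizing `σ(dim ·)`
(i.e. attaining the discrepancy). -/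
def IsWitness {Vt At : Type} [Fintype Vt] (hd tl : At → Vt) (α : Vt → ℕ)
    (M : ∀ a : At, Matrix (Fin (α (hd a))) (Fin (α (tl a))) ℂ) (σ : Vt → ℤ)
    (W : ∀ x : Vt, Submodule ℂ (Fin (α x) → ℂ)) : Prop :=
  IsSubrep hd tl α M W ∧
    ∀ W', IsSubrep hd tl α M W' → sval α σ W' ≤ sval α σ W

set_option synthInstance.maxHeartbeats 1000000 in
set_option maxHeartbeats 1000000 in
/-- Let `W` be the minimal witness of `(V,σ)` and `φ : W → V/W` a morphism of
representations. Then `ker φ` (viewed as a subrepresentation of `V`) is a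
witness of `(V,σ)`; consequently `ker φ = W`, and the dimension vector `i` of
the image of `φ` satisfies `σ(i) ≤ 0` and indeed `σ(i) = 0`. -/
theorem kernel_of_hom_minimal_witness {Vt At : Type} [Fintype Vt] [Fintype At]
    (hd tl : At → Vt) (α : Vt → ℕ)
    (M : ∀ a : At, Matrix (Fin (α (hd a))) (Fin (α (tl a))) ℂ) (σ : Vt → ℤ)
    (W : ∀ x : Vt, Submodule ℂ (Fin (α x) → ℂ))
    (hwit : IsWitness hd tl α M σ W)
    (hmin : ∀ W', IsWitness hd tl α M σ W' → ∀ x, W x ≤ W' x)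
    (φ : ∀ x : Vt, W x →ₗ[ℂ] ((Fin (α x) → ℂ) ⧸ W x))
    (hφ : ∀ a : At, ∀ v : W (tl a),
      φ (hd a) ⟨(M a).mulVec v, hwit.1 a v v.2⟩ =
        Submodule.mapQ (W (tl a)) (W (hd a)) (M a).mulVecLin
          (fun u hu => hwit.1 a u hu) (φ (tl a) v)) :
    IsWitness hd tl α M σ
        (fun x => (LinearMap.ker (φ x)).map (W x).subtype) ∧
      (∀ x, (LinearMap.ker (φ x)).map (W x).subtype = W x) ∧
      (∑ x, σ x * (Module.finrank ℂ (LinearMap.range (φ x)) : ℤ)) ≤ 0 ∧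
      (∑ x, σ x * (Module.finrank ℂ (LinearMap.range (φ x)) : ℤ)) = 0 := by
  classical
  set K : ∀ x : Vt, Submodule ℂ (Fin (α x) → ℂ) :=
    fun x => (LinearMap.ker (φ x)).map (W x).subtype with hK
  set U : ∀ x : Vt, Submodule ℂ (Fin (α x) → ℂ) :=
    fun x => Submodule.comap (W x).mkQ (LinearMap.range (φ x)) with hU
  -- K is a subrepresentation
  have hKsub : IsSubrep hd tl α M K := by
    rintro a v ⟨u, hu, rfl⟩
    refine ⟨⟨(M a).mulVec u, hwit.1 a u u.2⟩, ?_, rfl⟩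
    simp only [SetLike.mem_coe, LinearMap.mem_ker] at hu ⊢
    rw [hφ a u, hu, map_zero]
  -- U is a subrepresentation
  have hUsub : IsSubrep hd tl α M U := by
    intro a v hv
    obtain ⟨u, hu⟩ := hv
    have h1 : (W (hd a)).mkQ ((M a).mulVec v) =
        Submodule.mapQ (W (tl a)) (W (hd a)) (M a).mulVecLin
          (fun u hu => hwit.1 a u hu) ((W (tl a)).mkQ v) := by
      rfl
    have : (W (hd a)).mkQ ((M a).mulVec v) = φ (hd a) ⟨(M a).mulVec u, hwit.1 a u u.2⟩ := by
      rw [h1, ← hu, ← hφ a u]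
    exact ⟨_, this.symm⟩
  -- W ≤ U pointwise
  have hWU : ∀ x, W x ≤ U x := by
    intro x v hv
    have : (W x).mkQ v = 0 := (Submodule.Quotient.mk_eq_zero _).mpr hv
    simp only [hU, Submodule.mem_comap, this]
    exact zero_mem _
  -- finrank of U x
  have hUrank : ∀ x, (finrank ℂ (U x) : ℤ) =
      finrank ℂ (W x) + finrank ℂ (LinearMap.range (φ x)) := by
    intro x
    have g := ((W x).mkQ).domRestrict (U x)
    have hrange : LinearMap.range (((W x).mkQ).domRestrict (U x)) = LinearMap.range (φ x) := by
      rw [LinearMap.range_domRestrict, hU]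
      rw [Submodule.map_comap_eq, Submodule.range_mkQ, top_inf_eq]
    have hker : LinearMap.ker (((W x).mkQ).domRestrict (U x)) =
        (W x).comap (U x).subtype := by
      rw [LinearMap.ker_domRestrict, Submodule.ker_mkQ]
    have hkrank : finrank ℂ (LinearMap.ker (((W x).mkQ).domRestrict (U x))) =
        finrank ℂ (W x) := by
      rw [hker]
      exact (Submodule.comapSubtypeEquivOfLe (hWU x)).finrank_eq
    have := LinearMap.finrank_range_add_finrank_ker (((W x).mkQ).domRestrict (U x))
    rw [hrange, hkrank] at this
    push_cast [← this]
    ring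
  -- rank-nullity for φ x
  have hrn : ∀ x, (finrank ℂ (LinearMap.range (φ x)) : ℤ) + finrank ℂ (LinearMap.ker (φ x)) =
      finrank ℂ (W x) := by
    intro x; exact_mod_cast congrArg (Nat.cast (R := ℤ))
      (LinearMap.finrank_range_add_finrank_ker (φ x))
  -- finrank of K x
  have hKrank : ∀ x, finrank ℂ (K x) = finrank ℂ (LinearMap.ker (φ x)) := by
    intro x; exact Submodule.finrank_map_subtype_eq (W x) _
  -- sval U ≤ sval W gives the key inequality
  have hUle : sval α σ U ≤ sval α σ W := hwit.2 U hUsub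
  have hsum : (∑ x, σ x * (finrank ℂ (LinearMap.range (φ x)) : ℤ)) ≤ 0 := by
    have : sval α σ U = sval α σ W + ∑ x, σ x * (finrank ℂ (LinearMap.range (φ x)) : ℤ) := by
      unfold sval
      rw [← Finset.sum_add_distrib]
      refine Finset.sum_congr rfl fun x _ => ?_
      rw [hUrank x]; ring
    linarith
  -- sval K ≥ sval W
  have hKval : sval α σ W ≤ sval α σ K := by
    have : sval α σ K = sval α σ W - ∑ x, σ x * (finrank ℂ (LinearMap.range (φ x)) : ℤ) := by
      unfold sval
      rw [← Finset.sum_sub_distrib]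
      refine Finset.sum_congr rfl fun x _ => ?_
      rw [hKrank x, ← hrn x]; ring
    linarith
  have hKwit : IsWitness hd tl α M σ K :=
    ⟨hKsub, fun W'' h => le_trans (hwit.2 W'' h) hKval⟩
  have hKeq : ∀ x, K x = W x := by
    intro x
    refine le_antisymm (Submodule.map_subtype_le _ _) (hmin K hKwit x)
  have hr0 : ∀ x, (finrank ℂ (LinearMap.range (φ x)) : ℤ) = 0 := by
    intro x
    have h1 : finrank ℂ (K x) = finrank ℂ (W x) := by rw [hKeq x]
    have := hrn x
    rw [← h1, hKrank x] at this
    linarith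
  refine ⟨hKwit, hKeq, hsum, ?_⟩
  simp [hr0]
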